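/- arXiv:2601.00319 — 2 statements merged into one kernel-verified Lean document; each statement's English description precedes it below -/
import Mathlib

section
/- Let H be a Hilbert space, S ∈ B(H) an isometry with (S*)^n → 0 in the strong operator topology, and X ∈ B(H). Suppose the sequence X_n = ∑_{k=0}^{n-1} S^{n-1-k} X (S*)^k is uniformly bounded in norm. Then there exists A ∈ B(H) with ‖A‖ ≤ sup_n ‖X_n‖ such that X = A − S* A S*. -/
open ContinuousLinearMap
open scoped InnerProductSpace

/-- Let `S` be an isometry on a separable Hilbert space `H` whose adjoint powers tend to `0` in
the strong operator topology, and let `X ∈ B(H)`. If the sequence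
`X_n = ∑_{k=0}^{n-1} S^{n-1-k} X (S*)^k` is uniformly bounded in norm, then there exists
`A ∈ B(H)` with `‖A‖ ≤ sup_n ‖X_n‖` such that `X = A − S* A S*`. -/
theorem stmt4 {H : Type*} [NormedAddCommGroup H] [InnerProductSpace ℂ H] [CompleteSpace H]
    (S X : H →L[ℂ] H) (hS : adjoint S * S = 1)
    (hSOT : ∀ x : H, Filter.Tendsto (fun n : ℕ => ((adjoint S) ^ n) x) Filter.atTop (nhds 0))
    (hbdd : BddAbove (Set.range fun n : ℕ =>
      ‖∑ k ∈ Finset.range n, S ^ (n - 1 - k) * X * (adjoint S) ^ k‖)) :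
    ∃ A : H →L[ℂ] H,
      ‖A‖ ≤ ⨆ n : ℕ, ‖∑ k ∈ Finset.range n, S ^ (n - 1 - k) * X * (adjoint S) ^ k‖ ∧
      X = A - adjoint S * A * adjoint S := by
  classical
  set T : H →L[ℂ] H := adjoint S with hTdef
  set M : ℝ := ⨆ n : ℕ, ‖∑ k ∈ Finset.range n, S ^ (n - 1 - k) * X * T ^ k‖ with hMdef
  have hXn : ∀ n : ℕ, ‖∑ k ∈ Finset.range n, S ^ (n - 1 - k) * X * T ^ k‖ ≤ M := fun n =>
    le_ciSup hbdd n
  have hM0 : (0 : ℝ) ≤ M := by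
    have := hXn 0
    simpa using this
  -- `S` is an isometry
  have hSnorm : ∀ x : H, ‖S x‖ = ‖x‖ :=
    S.norm_map_iff_adjoint_comp_self.mpr hS
  have hSop : ‖S‖ ≤ 1 := S.opNorm_le_bound zero_le_one (fun x => by rw [hSnorm, one_mul])
  have hTop : ‖T‖ ≤ 1 := by
    rw [hTdef, LinearIsometryEquiv.norm_map]
    exact hSop
  have hTle : ∀ (n : ℕ) (y : H), ‖(T ^ n) y‖ ≤ ‖y‖ := by
    intro n
    induction n with
    | zero => intro y; simp
    | succ n ih =>
      intro y
      have : (T ^ (n + 1)) y = (T ^ n) (T y) := by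
        rw [pow_succ]; rfl
      rw [this]
      refine (ih (T y)).trans ?_
      calc ‖T y‖ ≤ ‖T‖ * ‖y‖ := T.le_opNorm y
        _ ≤ 1 * ‖y‖ := by gcongr
        _ = ‖y‖ := one_mul _
  -- powers cancel
  have hTS : ∀ m : ℕ, T ^ m * S ^ m = 1 := by
    intro m
    induction m with
    | zero => simp
    | succ m ih =>
      rw [pow_succ, pow_succ', mul_assoc, ← mul_assoc T S (S ^ m), hS, one_mul, ih]
  -- the sequence B
  set B : ℕ → (H →L[ℂ] H) := fun n => ∑ k ∈ Finset.range n, T ^ k * X * T ^ k with hBdef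
  have hBnorm : ∀ n : ℕ, ‖B n‖ ≤ M := by
    intro n
    cases n with
    | zero => simpa [hBdef] using hM0
    | succ n =>
      have hkey : B (n + 1) = T ^ n * ∑ k ∈ Finset.range (n + 1), S ^ (n + 1 - 1 - k) * X * T ^ k := by
        rw [hBdef, Finset.mul_sum]
        refine Finset.sum_congr rfl (fun k hk => ?_)
        have hk' : k ≤ n := Nat.lt_succ_iff.mp (Finset.mem_range.mp hk)
        have h1 : (n + 1 - 1 - k) = n - k := by omega
        have h2 : T ^ n = T ^ k * T ^ (n - k) := by
          rw [← pow_add]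
          congr 1
          omega
        rw [h1, ← mul_assoc, ← mul_assoc, h2]
        have : T ^ k * T ^ (n - k) * S ^ (n - k) = T ^ k := by
          rw [mul_assoc, hTS, mul_one]
        rw [this]
      rw [hkey]
      calc ‖T ^ n * ∑ k ∈ Finset.range (n + 1), S ^ (n + 1 - 1 - k) * X * T ^ k‖
          ≤ ‖T ^ n‖ * ‖∑ k ∈ Finset.range (n + 1), S ^ (n + 1 - 1 - k) * X * T ^ k‖ :=
            opNorm_comp_le _ _
        _ ≤ 1 * M := by
            have h1 : ‖T ^ n‖ ≤ 1 := by
              refine opNorm_le_bound _ zero_le_one (fun y => ?_)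
              rw [one_mul]; exact hTle n y
            have h2 := hXn (n + 1)
            have h0 : (0:ℝ) ≤ ‖∑ k ∈ Finset.range (n + 1), S ^ (n + 1 - 1 - k) * X * T ^ k‖ :=
              norm_nonneg _
            exact mul_le_mul h1 h2 h0 zero_le_one
        _ = M := one_mul M
  -- telescoping
  have htel : ∀ n : ℕ, B n - T * B n * T = X - T ^ n * X * T ^ n := by
    intro n
    have h1 : T * B n * T = ∑ k ∈ Finset.range n, T ^ (k + 1) * X * T ^ (k + 1) := by
      rw [hBdef, Finset.mul_sum, Finset.sum_mul]
      refine Finset.sum_congr rfl (fun k _ => ?_)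
      rw [pow_succ' T k]
      simp only [mul_assoc, pow_mul_comm']
    rw [h1, hBdef, ← Finset.sum_sub_distrib]
    rw [Finset.sum_range_sub' (fun k => T ^ k * X * T ^ k) n]
    simp
  -- SOT convergence of the error term
  have hSOTX : ∀ x : H, Filter.Tendsto (fun n : ℕ => (T ^ n * X * T ^ n) x)
      Filter.atTop (nhds 0) := by
    intro x
    have hX0 : Filter.Tendsto (fun n : ℕ => X ((T ^ n) x)) Filter.atTop (nhds 0) := by
      have := (X.continuous.tendsto 0).comp (hSOT x)
      rw [map_zero] at this
      exact this
    refine squeeze_zero_norm (fun n => ?_) (by simpa using hX0.norm)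
    have : (T ^ n * X * T ^ n) x = (T ^ n) (X ((T ^ n) x)) := rfl
    rw [this]
    have := hTle n (X ((T ^ n) x))
    simpa using this
  -- ultrafilter
  obtain ⟨u, hu⟩ := Filter.exists_ultrafilter_le (Filter.atTop : Filter ℕ)
  have hlim : ∀ (f : ℕ → ℂ) (C : ℝ), (∀ n, ‖f n‖ ≤ C) →
      Filter.Tendsto f (↑u) (nhds (Filter.limUnder (↑u) f)) := by
    intro f C hf
    obtain ⟨z, _, hz⟩ := (isCompact_closedBall (0 : ℂ) C).ultrafilter_le_nhds (u.map f)
      (by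
        refine Filter.le_principal_iff.mpr ?_
        have : ∀ n : ℕ, f n ∈ Metric.closedBall (0 : ℂ) C := fun n => by
          simpa [Metric.mem_closedBall, dist_eq_norm] using hf n
        exact Filter.mem_map.mpr (Filter.univ_mem' this))
    have hz' : Filter.Tendsto f (↑u) (nhds z) := hz
    rwa [hz'.limUnder_eq]
  -- limit bilinear form
  set L : H → H → ℂ := fun x y => Filter.limUnder (↑u) (fun n => ⟪(B n) x, y⟫_ℂ) with hLdef
  have hbound : ∀ (x y : H) (n : ℕ), ‖⟪(B n) x, y⟫_ℂ‖ ≤ M * ‖x‖ * ‖y‖ := by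
    intro x y n
    calc ‖⟪(B n) x, y⟫_ℂ‖ ≤ ‖(B n) x‖ * ‖y‖ := norm_inner_le_norm _ _
      _ ≤ ‖B n‖ * ‖x‖ * ‖y‖ :=
          mul_le_mul_of_nonneg_right ((B n).le_opNorm x) (norm_nonneg _)
      _ ≤ M * ‖x‖ * ‖y‖ :=
          mul_le_mul_of_nonneg_right
            (mul_le_mul_of_nonneg_right (hBnorm n) (norm_nonneg _)) (norm_nonneg _)
  have hL : ∀ x y : H, Filter.Tendsto (fun n => ⟪(B n) x, y⟫_ℂ) (↑u) (nhds (L x y)) :=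
    fun x y => hlim _ (M * ‖x‖ * ‖y‖) (hbound x y)
  have hLnorm : ∀ x y : H, ‖L x y‖ ≤ M * ‖x‖ * ‖y‖ := by
    intro x y
    exact le_of_tendsto' (hL x y).norm (fun n => hbound x y n)
  -- linear functional for each x
  have hLaddy : ∀ (x y y' : H), L x (y + y') = L x y + L x y' := by
    intro x y y'
    refine tendsto_nhds_unique (hL x (y + y')) ?_
    have := (hL x y).add (hL x y')
    simpa [inner_add_right] using this
  have hLsmuly : ∀ (c : ℂ) (x y : H), L x (c • y) = c * L x y := by
    intro c x y
    refine tendsto_nhds_unique (hL x (c • y)) ?_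
    have := (hL x y).const_mul c
    simpa [inner_smul_right] using this
  set f : H → (H →L[ℂ] ℂ) := fun x =>
    LinearMap.mkContinuous
      { toFun := L x
        map_add' := hLaddy x
        map_smul' := fun c y => hLsmuly c x y }
      (M * ‖x‖)
      (fun y => by simpa [mul_assoc] using hLnorm x y) with hfdef
  have hf_apply : ∀ x y : H, f x y = L x y := fun x y => rfl
  -- the operator A
  set Araw : H → H := fun x => (InnerProductSpace.toDual ℂ H).symm (f x) with hAraw
  have hArawinner : ∀ x y : H, ⟪Araw x, y⟫_ℂ = L x y := by
    intro x y
    show ⟪(InnerProductSpace.toDual ℂ H).symm (f x), y⟫_ℂ = L x y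
    rw [InnerProductSpace.toDual_symm_apply]
    rfl
  have hLaddx : ∀ (x x' y : H), L (x + x') y = L x y + L x' y := by
    intro x x' y
    refine tendsto_nhds_unique (hL (x + x') y) ?_
    have := (hL x y).add (hL x' y)
    simpa [inner_add_left] using this
  have hLsmulx : ∀ (c : ℂ) (x y : H), L (c • x) y = (starRingEnd ℂ) c * L x y := by
    intro c x y
    refine tendsto_nhds_unique (hL (c • x) y) ?_
    have := (hL x y).const_mul ((starRingEnd ℂ) c)
    simpa [inner_smul_left, mul_comm ((starRingEnd ℂ) c)] using this
  have hAadd : ∀ x x' : H, Araw (x + x') = Araw x + Araw x' := by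
    intro x x'
    refine ext_inner_right ℂ (fun y => ?_)
    rw [hArawinner, inner_add_left, hArawinner, hArawinner, hLaddx]
  have hAsmul : ∀ (c : ℂ) (x : H), Araw (c • x) = c • Araw x := by
    intro c x
    refine ext_inner_right ℂ (fun y => ?_)
    rw [hArawinner, hLsmulx, inner_smul_left, hArawinner]
  have hArawnorm : ∀ x : H, ‖Araw x‖ ≤ M * ‖x‖ := by
    intro x
    rw [hAraw]
    rw [LinearIsometryEquiv.norm_map]
    refine ContinuousLinearMap.opNorm_le_bound _ (by positivity) (fun y => ?_)
    simpa [mul_assoc, hf_apply] using hLnorm x y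
  set A : H →L[ℂ] H :=
    LinearMap.mkContinuous
      { toFun := Araw
        map_add' := hAadd
        map_smul' := fun c x => hAsmul c x }
      M hArawnorm with hAdef
  have hAinner : ∀ x y : H, ⟪A x, y⟫_ℂ = L x y := fun x y => hArawinner x y
  refine ⟨A, ?_, ?_⟩
  · exact LinearMap.mkContinuous_norm_le _ hM0 _
  · -- X = A - T * A * T
    refine ContinuousLinearMap.ext (fun x => ?_)
    refine ext_inner_right ℂ (fun y => ?_)
    have h1 : Filter.Tendsto (fun n => ⟪(B n - T * B n * T) x, y⟫_ℂ) (↑u)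
        (nhds (⟪X x, y⟫_ℂ)) := by
      have herr : Filter.Tendsto (fun n => ⟪(T ^ n * X * T ^ n) x, y⟫_ℂ) Filter.atTop
          (nhds 0) := by
        have := Filter.Tendsto.inner (𝕜 := ℂ) (hSOTX x) (tendsto_const_nhds (x := y))
        simpa using this
      have : Filter.Tendsto (fun n => ⟪X x, y⟫_ℂ - ⟪(T ^ n * X * T ^ n) x, y⟫_ℂ)
          Filter.atTop (nhds (⟪X x, y⟫_ℂ)) := by
        simpa using (tendsto_const_nhds (x := ⟪X x, y⟫_ℂ)).sub herr
      have h2 : (fun n => ⟪(B n - T * B n * T) x, y⟫_ℂ) =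
          fun n => ⟪X x, y⟫_ℂ - ⟪(T ^ n * X * T ^ n) x, y⟫_ℂ := by
        funext n
        rw [htel n]
        simp [inner_sub_left]
      rw [h2]
      exact this.mono_left hu
    have h2 : Filter.Tendsto (fun n => ⟪(B n - T * B n * T) x, y⟫_ℂ) (↑u)
        (nhds (⟪(A - T * A * T) x, y⟫_ℂ)) := by
      have hb : ∀ n, ⟪(B n - T * B n * T) x, y⟫_ℂ = ⟪(B n) x, y⟫_ℂ - ⟪(B n) (T x), S y⟫_ℂ := by
        intro n
        have h5 : ⟪T ((B n) (T x)), y⟫_ℂ = ⟪(B n) (T x), S y⟫_ℂ := by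
          rw [hTdef]
          exact ContinuousLinearMap.adjoint_inner_left S y _
        have h6 : (B n - T * B n * T) x = (B n) x - T ((B n) (T x)) := rfl
        rw [h6, inner_sub_left, h5]
      have ha : ⟪(A - T * A * T) x, y⟫_ℂ = L x y - L (T x) (S y) := by
        have h5 : ⟪T (A (T x)), y⟫_ℂ = ⟪A (T x), S y⟫_ℂ := by
          rw [hTdef]
          exact ContinuousLinearMap.adjoint_inner_left S y _
        have h6 : (A - T * A * T) x = A x - T (A (T x)) := rfl
        rw [h6, inner_sub_left, h5, hAinner, hAinner]
      rw [ha]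
      exact ((hL x y).sub (hL (T x) (S y))).congr (fun n => (hb n).symm)
    exact tendsto_nhds_unique h1 h2
end

section
/- Let H be a Hilbert space and S ∈ B(H) an isometry. If there exists A ∈ B(H) with S A − A S = T where T satisfies S* T S = T (a Toeplitz-type relation), then T = 0. -/
open ContinuousLinearMap
open scoped ComplexInnerProductSpace

/-- Let `S` be an isometry (`S* S = I`) on a Hilbert space `H`. If there exists `A ∈ B(H)` with
`S A − A S = T` where `T` satisfies the Toeplitz-type relation `S* T S = T`, then `T = 0`. -/
theorem stmt7 {H : Type*} [NormedAddCommGroup H] [InnerProductSpace ℂ H] [CompleteSpace H]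
    (S T : H →L[ℂ] H) (hS : adjoint S * S = 1)
    (hT : adjoint S * T * S = T) (h : ∃ A : H →L[ℂ] H, S * A - A * S = T) :
    T = 0 := by
  obtain ⟨A, hA⟩ := h
  set B := adjoint S with hB
  -- S is a contraction
  have hiso : ∀ x : H, ‖S x‖ = ‖x‖ := by
    intro x
    have h1 : (inner ℂ ((B * S) x) x : ℂ) = inner ℂ x x := by rw [hS]; simp
    rw [ContinuousLinearMap.mul_apply, hB, adjoint_inner_left] at h1
    rw [@norm_eq_sqrt_re_inner ℂ _ _ _ _ (S x), @norm_eq_sqrt_re_inner ℂ _ _ _ _ x, h1]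
  have hSnorm : ‖S‖ ≤ 1 := by
    refine opNorm_le_bound _ zero_le_one (fun x => by rw [hiso, one_mul])
  have hBnorm : ‖B‖ ≤ 1 := by rw [hB, ContinuousLinearMap.adjoint.norm_map S]; exact hSnorm
  have hpowB : ∀ n : ℕ, ‖B ^ n‖ ≤ 1 := by
    intro n
    induction n with
    | zero => rw [pow_zero]; exact norm_id_le
    | succ n ih =>
      calc ‖B ^ (n + 1)‖ = ‖B ^ n * B‖ := by rw [pow_succ]
      _ ≤ ‖B ^ n‖ * ‖B‖ := opNorm_comp_le _ _
      _ ≤ 1 * 1 := mul_le_mul ih hBnorm (norm_nonneg _) zero_le_one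
      _ = 1 := one_mul 1
  have hpowS : ∀ n : ℕ, ‖S ^ n‖ ≤ 1 := by
    intro n
    induction n with
    | zero => rw [pow_zero]; exact norm_id_le
    | succ n ih =>
      calc ‖S ^ (n + 1)‖ = ‖S ^ n * S‖ := by rw [pow_succ]
      _ ≤ ‖S ^ n‖ * ‖S‖ := opNorm_comp_le _ _
      _ ≤ 1 * 1 := mul_le_mul ih hSnorm (norm_nonneg _) zero_le_one
      _ = 1 := one_mul 1
  -- B^n T S^n = T
  have hTn : ∀ n : ℕ, B ^ n * T * S ^ n = T := by
    intro n
    induction n with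
    | zero => simp
    | succ n ih =>
      have : B ^ (n + 1) * T * S ^ (n + 1) = B ^ n * (B * T * S) * S ^ n := by
        rw [pow_succ, pow_succ']; noncomm_ring
      rw [this, hT, ih]
  -- A − S*S A S... : A - B A S = B T
  have hkey : A - B * A * S = B * T := by
    have : B * (S * A - A * S) = B * T := by rw [hA]
    calc A - B * A * S = B * S * A - B * A * S := by rw [hS, one_mul]
    _ = B * (S * A - A * S) := by noncomm_ring
    _ = B * T := this
  -- telescoping
  have htel : ∀ n : ℕ, A - B ^ n * A * S ^ n = (n : ℂ) • (B * T) := by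
    intro n
    induction n with
    | zero => simp
    | succ n ih =>
      have h1 : B ^ n * (A - B * A * S) * S ^ n = B * T := by
        rw [hkey]
        have : B ^ n * (B * T) * S ^ n = B * (B ^ n * T * S ^ n) := by
          simp only [← mul_assoc, ← pow_succ, ← pow_succ']
        rw [this, hTn n]
      have h2 : A - B ^ (n + 1) * A * S ^ (n + 1) =
          (A - B ^ n * A * S ^ n) + B ^ n * (A - B * A * S) * S ^ n := by
        rw [pow_succ, pow_succ']; noncomm_ring
      rw [h2, ih, h1, Nat.cast_succ, add_smul, one_smul]
  -- norm bound
  have hbound : ∀ n : ℕ, (n : ℝ) * ‖B * T‖ ≤ 2 * ‖A‖ := by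
    intro n
    have h1 : ‖(n : ℂ) • (B * T)‖ = (n : ℝ) * ‖B * T‖ := by
      rw [norm_smul]; simp
    have h2 : ‖B ^ n * A * S ^ n‖ ≤ ‖A‖ := by
      calc ‖B ^ n * A * S ^ n‖ ≤ ‖B ^ n * A‖ * ‖S ^ n‖ := opNorm_comp_le _ _
      _ ≤ ‖B ^ n‖ * ‖A‖ * ‖S ^ n‖ := by
          gcongr; exact opNorm_comp_le _ _
      _ ≤ 1 * ‖A‖ * 1 := by
          gcongr
          · exact hpowB n
          · exact hpowS n
      _ = ‖A‖ := by ring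
    calc (n : ℝ) * ‖B * T‖ = ‖A - B ^ n * A * S ^ n‖ := by rw [htel n, h1]
    _ ≤ ‖A‖ + ‖B ^ n * A * S ^ n‖ := norm_sub_le _ _
    _ ≤ ‖A‖ + ‖A‖ := by linarith
    _ = 2 * ‖A‖ := by ring
  have hBT : B * T = 0 := by
    by_contra hne
    have hpos : 0 < ‖B * T‖ := norm_pos_iff.mpr hne
    obtain ⟨n, hn⟩ := exists_nat_gt (2 * ‖A‖ / ‖B * T‖)
    have := hbound n
    have : (n : ℝ) ≤ 2 * ‖A‖ / ‖B * T‖ := (le_div_iff₀ hpos).mpr this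
    linarith
  calc T = B * T * S := hT.symm
  _ = 0 := by rw [hBT, zero_mul]
end
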